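/- arXiv:2210.10749 — 2 statements merged into one kernel-verified Lean document; each statement's English description precedes it below -/
import Mathlib

section
/- Consider the 1D gridworld semiautomaton with states Q = {0,1,…,S}, inputs σ̃ ∈ {−1,+1}, and transitions q_t = min(S, max(0, q_{t−1} + σ̃_t)). Let z_t := Σ_{i≤t} σ̃_i be the (unclamped) prefix sums, let t_uniq be the maximal index such that {z_τ : t_uniq ≤ τ ≤ T} contains exactly S+1 distinct values (assume such an index exists), and let t_min (resp. t_max) be the last index τ ≥ t_uniq achieving the minimum (resp. maximum) of z over [t_uniq, T]. Then: if t_min > t_max the state satisfies q_{t_min} = 0, and otherwise q_{t_max} = S. -/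
/-- The state sequence of a semiautomaton: `q_t = δ(q_{t-1}, σ_t)`. -/
def stateSeq {Q A : Type*} (δ : Q → A → Q) (q0 : Q) (σ : ℕ → A) : ℕ → Q
  | 0 => q0
  | t + 1 => δ (stateSeq δ q0 σ t) (σ (t + 1))

/-- Discrete intermediate value theorem for ±1 walks (increasing version). -/
lemma ivt_pm (f : ℕ → ℤ) (hf : ∀ t, f (t+1) = f t + 1 ∨ f (t+1) = f t - 1)
    (a : ℕ) (k : ℤ) (h1 : f a ≤ k) :
    ∀ b, a ≤ b → k ≤ f b → ∃ c, a ≤ c ∧ c ≤ b ∧ f c = k := by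
  intro b
  induction b with
  | zero =>
    intro hab h2
    have ha : a = 0 := Nat.le_zero.mp hab
    subst ha
    exact ⟨0, le_refl _, le_refl _, le_antisymm h1 h2⟩
  | succ n ih =>
    intro hab h2
    rcases Nat.lt_or_ge a (n+1) with h | h
    · have han : a ≤ n := Nat.lt_succ_iff.mp h
      rcases le_or_gt k (f n) with hk | hk
      · obtain ⟨c, hc1, hc2, hc3⟩ := ih han hk
        exact ⟨c, hc1, Nat.le_succ_of_le hc2, hc3⟩
      · have : f (n+1) = k := by
          rcases hf n with h' | h' <;> omega
        exact ⟨n+1, hab, le_refl _, this⟩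
    · have ha : a = n + 1 := le_antisymm hab h
      exact ⟨n+1, hab, le_refl _, le_antisymm (ha ▸ h1) h2⟩

theorem gridworld_boundary_detection (S : ℕ) (hS : 1 ≤ S)
    (σ : ℕ → ℤ) (hσ : ∀ i, σ i = 1 ∨ σ i = -1)
    (q0 : ℤ) (hq0 : 0 ≤ q0 ∧ q0 ≤ S)
    (T : ℕ)
    -- the unclamped prefix sums
    (z : ℕ → ℤ) (hz : ∀ t, z t = ∑ i ∈ Finset.range t, σ (i + 1))
    -- the clamped gridworld state sequence
    (q : ℕ → ℤ) (hq : ∀ t, q t = stateSeq (fun p s => min (S : ℤ) (max 0 (p + s))) q0 σ t)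
    -- t_uniq : maximal index such that z takes exactly S+1 distinct values on [t_uniq, T]
    (tuniq : ℕ) (htuT : tuniq ≤ T)
    (huniq : ((Finset.Icc tuniq T).image z).card = S + 1)
    (hmaxuniq : ∀ t', tuniq < t' → t' ≤ T →
      ((Finset.Icc t' T).image z).card ≠ S + 1)
    -- t_min : last index in [t_uniq, T] achieving the minimum of z
    (tmin : ℕ) (htmin : tmin ∈ Finset.Icc tuniq T)
    (hmin : ∀ τ ∈ Finset.Icc tuniq T, z tmin ≤ z τ)
    (hminlast : ∀ τ ∈ Finset.Icc tuniq T, z τ = z tmin → τ ≤ tmin)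
    -- t_max : last index in [t_uniq, T] achieving the maximum of z
    (tmax : ℕ) (htmax : tmax ∈ Finset.Icc tuniq T)
    (hmax : ∀ τ ∈ Finset.Icc tuniq T, z τ ≤ z tmax)
    (hmaxlast : ∀ τ ∈ Finset.Icc tuniq T, z τ = z tmax → τ ≤ tmax) :
    (tmax < tmin → q tmin = 0) ∧ (¬ tmax < tmin → q tmax = S) := by
  -- step property of z
  have hzstep : ∀ t, z (t+1) = z t + 1 ∨ z (t+1) = z t - 1 := by
    intro t
    have : z (t+1) = z t + σ (t+1) := by
      rw [hz, hz, Finset.sum_range_succ]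
    rcases hσ (t+1) with h | h <;> rw [this, h] <;> simp [sub_eq_add_neg]
  -- step property of q
  have hqstep : ∀ t, q (t+1) = min (S : ℤ) (max 0 (q t + σ (t+1))) := by
    intro t; rw [hq (t+1), hq t]; rfl
  -- bounds on q
  have hqb : ∀ t, 0 ≤ q t ∧ q t ≤ S := by
    intro t
    induction t with
    | zero => rw [hq 0]; exact hq0
    | succ n ih =>
      rw [hqstep n]
      constructor
      · exact le_min (by exact_mod_cast Nat.zero_le S) (le_max_left 0 _)
      · exact min_le_left _ _
  simp only [Finset.mem_Icc] at htmin htmax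
  -- the image of z on [tuniq,T] is exactly Icc (z tmin) (z tmax)
  have himg : (Finset.Icc tuniq T).image z = Finset.Icc (z tmin) (z tmax) := by
    apply Finset.Subset.antisymm
    · intro x hx
      simp only [Finset.mem_image] at hx
      obtain ⟨τ, hτ, rfl⟩ := hx
      exact Finset.mem_Icc.mpr ⟨hmin τ hτ, hmax τ hτ⟩
    · intro k hk
      rw [Finset.mem_Icc] at hk
      simp only [Finset.mem_image]
      rcases le_or_gt tmin tmax with h | h
      · obtain ⟨c, hc1, hc2, hc3⟩ := ivt_pm z hzstep tmin k hk.1 tmax h hk.2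
        exact ⟨c, Finset.mem_Icc.mpr ⟨le_trans htmin.1 hc1, le_trans hc2 htmax.2⟩, hc3⟩
      · have hf : ∀ t, (-z ·) (t+1) = (-z ·) t + 1 ∨ (-z ·) (t+1) = (-z ·) t - 1 := by
          intro t; have := hzstep t; dsimp only; omega
        obtain ⟨c, hc1, hc2, hc3⟩ := ivt_pm (-z ·) hf tmax (-k) (by simpa using hk.2)
          tmin h.le (by simpa using hk.1)
        refine ⟨c, Finset.mem_Icc.mpr ⟨le_trans htmax.1 hc1, le_trans hc2 htmin.2⟩, ?_⟩
        simpa using congrArg Neg.neg hc3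
  -- hence z tmax - z tmin = S
  have hdiff : z tmax - z tmin = S := by
    have hle : z tmin ≤ z tmax := hmin tmax (Finset.mem_Icc.mpr htmax)
    have := huniq
    rw [himg, Int.card_Icc] at this
    omega
  constructor
  · -- case tmax < tmin : q tmin = 0
    intro hlt
    -- invariant: for tmax ≤ t ≤ tmin, q t ≤ z t - z tmax + S
    have inv : ∀ t, tmax ≤ t → t ≤ tmin → q t ≤ z t - z tmax + S := by
      intro t
      induction t with
      | zero =>
        intro h1 h2
        have : tmax = 0 := Nat.le_zero.mp h1
        subst this
        simpa using (hqb 0).2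
      | succ n ih =>
        intro h1 h2
        rcases Nat.lt_or_ge tmax (n+1) with h | h
        · have hn : tmax ≤ n := Nat.lt_succ_iff.mp h
          have hn2 : n ≤ tmin := le_trans (Nat.le_succ n) h2
          have ihn := ih hn hn2
          -- z n ≥ z tmin (n ∈ [tuniq, T])
          have hzn1 : z tmin ≤ z (n+1) :=
            hmin (n+1) (Finset.mem_Icc.mpr ⟨le_trans htmax.1 h1, le_trans h2 htmin.2⟩)
          have hzs : z (n+1) = z n + σ (n+1) := by
            rw [hz, hz, Finset.sum_range_succ]
          rw [hqstep n]
          have hσn := hσ (n+1)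
          have h0 : (0:ℤ) ≤ z (n+1) - z tmax + S := by omega
          rcases le_or_gt (q n + σ (n+1)) 0 with hc | hc
          · have : max 0 (q n + σ (n+1)) = 0 := max_eq_left hc
            rw [this]
            have : min (S:ℤ) 0 ≤ 0 := min_le_right _ _
            omega
          · have : max 0 (q n + σ (n+1)) = q n + σ (n+1) := max_eq_right hc.le
            rw [this]
            have : min (S:ℤ) (q n + σ (n+1)) ≤ q n + σ (n+1) := min_le_right _ _
            rcases hσn with h' | h' <;> omega
        · have : tmax = n + 1 := le_antisymm h1 h
          rw [← this]
          have := (hqb tmax).2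
          omega
    have h1 := inv tmin hlt.le (le_refl _)
    have h2 := (hqb tmin).1
    omega
  · -- case tmin ≤ tmax : q tmax = S
    intro hnlt
    have hle : tmin ≤ tmax := Nat.le_of_not_lt hnlt
    -- invariant: for tmin ≤ t ≤ tmax, z t - z tmin ≤ q t
    have inv : ∀ t, tmin ≤ t → t ≤ tmax → z t - z tmin ≤ q t := by
      intro t
      induction t with
      | zero =>
        intro h1 h2
        have : tmin = 0 := Nat.le_zero.mp h1
        rw [this]
        simpa using (hqb 0).1
      | succ n ih =>
        intro h1 h2
        rcases Nat.lt_or_ge tmin (n+1) with h | h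
        · have hn : tmin ≤ n := Nat.lt_succ_iff.mp h
          have hn2 : n ≤ tmax := le_trans (Nat.le_succ n) h2
          have ihn := ih hn hn2
          have hzn1 : z (n+1) ≤ z tmax :=
            hmax (n+1) (Finset.mem_Icc.mpr ⟨le_trans htmin.1 h1, le_trans h2 htmax.2⟩)
          have hzs : z (n+1) = z n + σ (n+1) := by
            rw [hz, hz, Finset.sum_range_succ]
          rw [hqstep n]
          have hσn := hσ (n+1)
          have hub : z (n+1) - z tmin ≤ S := by omega
          have hmx : q n + σ (n+1) ≤ max 0 (q n + σ (n+1)) := le_max_right _ _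
          have hq0n := (hqb n).1
          rcases le_or_gt (S:ℤ) (max 0 (q n + σ (n+1))) with hc | hc
          · have : min (S:ℤ) (max 0 (q n + σ (n+1))) = S := min_eq_left hc
            omega
          · have : min (S:ℤ) (max 0 (q n + σ (n+1))) = max 0 (q n + σ (n+1)) :=
              min_eq_right hc.le
            rcases hσn with h' | h' <;> omega
        · have : tmin = n + 1 := le_antisymm h1 h
          rw [← this]
          have := (hqb tmin).1
          omega
    have h1 := inv tmax hle (le_refl _)
    have h2 := (hqb tmax).2
    omega
end

section
/- Let f : X → ℝ^d be any function on a finite set X ⊆ ℝ with |x − x'| ≥ Δ > 0 for all distinct x, x' ∈ X. Then there exists a two-layer ReLU network g(x) = W₂·ReLU(W₁x + b₁) with hidden width 4|X| such that g(x + ξ) = f(x) for every x ∈ X and every perturbation |ξ| ≤ Δ/4. -/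
lemma bump_eq_plateau {Δ t : ℝ} (hΔ : 0 < Δ) (ht : |t| ≤ Δ / 4) :
    max (t + Δ/2) 0 - max (t + Δ/4) 0 - max (t - Δ/4) 0 + max (t - Δ/2) 0 = Δ/4 := by
  rw [abs_le] at ht
  rw [max_eq_left (by linarith : (0:ℝ) ≤ t + Δ/2),
      max_eq_left (by linarith : (0:ℝ) ≤ t + Δ/4),
      max_eq_right (by linarith : t - Δ/4 ≤ 0),
      max_eq_right (by linarith : t - Δ/2 ≤ 0)]
  ring

lemma bump_eq_zero {Δ t : ℝ} (hΔ : 0 < Δ) (ht : Δ/2 ≤ |t|) :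
    max (t + Δ/2) 0 - max (t + Δ/4) 0 - max (t - Δ/4) 0 + max (t - Δ/2) 0 = 0 := by
  rcases le_abs.mp ht with h | h
  · rw [max_eq_left (by linarith : (0:ℝ) ≤ t + Δ/2),
        max_eq_left (by linarith : (0:ℝ) ≤ t + Δ/4),
        max_eq_left (by linarith : (0:ℝ) ≤ t - Δ/4),
        max_eq_left (by linarith : (0:ℝ) ≤ t - Δ/2)]
    ring
  · rw [max_eq_right (by linarith : t + Δ/2 ≤ 0),
        max_eq_right (by linarith : t + Δ/4 ≤ 0),
        max_eq_right (by linarith : t - Δ/4 ≤ 0),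
        max_eq_right (by linarith : t - Δ/2 ≤ 0)]
    ring

theorem two_layer_relu_interpolation (d : ℕ) (X : Finset ℝ) (Δ : ℝ) (hΔ : 0 < Δ)
    (hsep : ∀ x ∈ X, ∀ x' ∈ X, x ≠ x' → Δ ≤ |x - x'|)
    (f : ℝ → (Fin d → ℝ)) :
    ∃ (W₁ : Fin (4 * X.card) → ℝ) (b₁ : Fin (4 * X.card) → ℝ)
      (W₂ : Fin d → Fin (4 * X.card) → ℝ),
      ∀ x ∈ X, ∀ ξ : ℝ, |ξ| ≤ Δ / 4 →
        (fun j => ∑ i, W₂ j i * max (W₁ i * (x + ξ) + b₁ i) 0) = f x := by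
  classical
  set c : Fin X.card → ℝ := fun k => (X.equivFin.symm k : ℝ) with hc
  have hcX : ∀ k, c k ∈ X := fun k => (X.equivFin.symm k).2
  set off : Fin 4 → ℝ := ![Δ/2, Δ/4, -(Δ/4), -(Δ/2)] with hoff
  set sgn : Fin 4 → ℝ := ![1, -1, -1, 1] with hsgn
  set e := (finProdFinEquiv : Fin 4 × Fin X.card ≃ Fin (4 * X.card)) with he
  refine ⟨fun _ => 1, fun i => off (e.symm i).1 - c (e.symm i).2,
    fun j i => sgn (e.symm i).1 * (4/Δ) * f (c (e.symm i).2) j, ?_⟩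
  intro x hx ξ hξ
  funext j
  simp only
  rw [← e.sum_comp (fun i => sgn (e.symm i).1 * (4/Δ) * f (c (e.symm i).2) j *
        max (1 * (x + ξ) + (off (e.symm i).1 - c (e.symm i).2)) 0)]
  simp only [Equiv.symm_apply_apply]
  rw [Fintype.sum_prod_type_right]
  set k₀ : Fin X.card := X.equivFin ⟨x, hx⟩ with hk₀
  have hck₀ : c k₀ = x := by simp [hc, hk₀]
  have inner : ∀ k : Fin X.card,
      (∑ r : Fin 4, sgn r * (4/Δ) * f (c k) j * max (1 * (x + ξ) + (off r - c k)) 0)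
      = (4/Δ) * f (c k) j *
        (max ((x + ξ - c k) + Δ/2) 0 - max ((x + ξ - c k) + Δ/4) 0
          - max ((x + ξ - c k) - Δ/4) 0 + max ((x + ξ - c k) - Δ/2) 0) := by
    intro k
    rw [Fin.sum_univ_four]
    simp only [hsgn, hoff, Matrix.cons_val_zero, Matrix.cons_val_one, Matrix.head_cons,
      Matrix.cons_val_two, Matrix.tail_cons, Matrix.cons_val_three]
    have e1 : 1 * (x + ξ) + (Δ/2 - c k) = (x + ξ - c k) + Δ/2 := by ring
    have e2 : 1 * (x + ξ) + (Δ/4 - c k) = (x + ξ - c k) + Δ/4 := by ring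
    have e3 : 1 * (x + ξ) + (-(Δ/4) - c k) = (x + ξ - c k) - Δ/4 := by ring
    have e4 : 1 * (x + ξ) + (-(Δ/2) - c k) = (x + ξ - c k) - Δ/2 := by ring
    rw [e1, e2, e3, e4]; ring
  rw [Finset.sum_congr rfl (fun k _ => inner k)]
  rw [Finset.sum_eq_single k₀]
  · rw [hck₀]
    have : x + ξ - x = ξ := by ring
    rw [this, bump_eq_plateau hΔ hξ]
    field_simp
  · intro k _ hk
    have hne : c k ≠ x := by
      intro hcontra
      apply hk
      have : (X.equivFin.symm k : X) = ⟨x, hx⟩ := Subtype.ext hcontra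
      rw [hk₀, ← this, Equiv.apply_symm_apply]
    have hsep' : Δ ≤ |c k - x| := hsep _ (hcX k) x hx hne
    have habs : Δ/2 ≤ |x + ξ - c k| := by
      rw [abs_le] at hξ
      rcases le_abs.mp hsep' with h | h
      · rw [le_abs]; right; linarith
      · rw [le_abs]; left; linarith
    rw [bump_eq_zero hΔ habs, mul_zero]
  · intro h; exact absurd (Finset.mem_univ k₀) h
end
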